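/- Quantitative Hardy-Littlewood: Let f : [0,∞) → [0,∞) be non-increasing, Ω ⊂ ℝ^N measurable with finite measure, Ω* the ball centered at 0 with |Ω*| = |Ω| and radius R_Ω = (|Ω|/ω_N)^(1/N). Set R₁ = (|Ω ∩ Ω*|/ω_N)^(1/N) and R₂ = ((|Ω \ Ω*| + |Ω|)/ω_N)^(1/N). Then ∫_{Ω*} f(|x|) dx − ∫_Ω f(|x|) dx ≥ N ω_N ∫_{R₁}^{R₂} |f(ρ) − f(R_Ω)| ρ^{N−1} dρ. -/

import Mathlib

open MeasureTheory Metric intervalIntegral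
open scoped ENNReal NNReal

/-- Bathtub principle (lintegral form): if `μ S = μ T < ∞`, `g ≥ c` on `S \ T` and
`g ≤ c` on `T \ S`, then `∫⁻ g` over `T` is at most `∫⁻ g` over `S`. -/
lemma bathtub_lintegral {α : Type*} [MeasurableSpace α] {μ : Measure α} {g : α → ℝ≥0∞}
    {S T : Set α} (hS : MeasurableSet S) (hT : MeasurableSet T)
    (hμ : μ S = μ T) (hTfin : μ T ≠ ⊤) {c : ℝ≥0∞}
    (h1 : ∀ x ∈ S \ T, c ≤ g x) (h2 : ∀ x ∈ T \ S, g x ≤ c) :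
    ∫⁻ x in T, g x ∂μ ≤ ∫⁻ x in S, g x ∂μ := by
  have hint : μ (T ∩ S) ≠ ⊤ := (lt_of_le_of_lt (measure_mono Set.inter_subset_left)
    hTfin.lt_top).ne
  have key : μ (T \ S) = μ (S \ T) := by
    have e1 : μ (T ∩ S) + μ (T \ S) = μ T := measure_inter_add_diff T hS
    have e2 : μ (T ∩ S) + μ (S \ T) = μ S := by
      rw [Set.inter_comm]; exact measure_inter_add_diff S hT
    exact (ENNReal.add_right_inj hint).mp (by rw [e1, e2, hμ])
  calc ∫⁻ x in T, g x ∂μ = ∫⁻ x in T ∩ S, g x ∂μ + ∫⁻ x in T \ S, g x ∂μ :=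
        (lintegral_inter_add_diff g T hS).symm
    _ ≤ ∫⁻ x in T ∩ S, g x ∂μ + c * μ (T \ S) := by
        gcongr
        calc ∫⁻ x in T \ S, g x ∂μ ≤ ∫⁻ _ in T \ S, c ∂μ :=
              setLIntegral_mono' (hT.diff hS) h2
          _ = c * μ (T \ S) := setLIntegral_const _ _
    _ = ∫⁻ x in S ∩ T, g x ∂μ + c * μ (S \ T) := by rw [Set.inter_comm, key]
    _ ≤ ∫⁻ x in S ∩ T, g x ∂μ + ∫⁻ x in S \ T, g x ∂μ := by
        gcongr
        calc c * μ (S \ T) = ∫⁻ _ in S \ T, c ∂μ := (setLIntegral_const _ _).symm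
          _ ≤ ∫⁻ x in S \ T, g x ∂μ := setLIntegral_mono' (hS.diff hT) h1
    _ = ∫⁻ x in S, g x ∂μ := lintegral_inter_add_diff g S hT

theorem quantitative_hardy_littlewood (N : ℕ) (hN : 1 ≤ N) (f : ℝ → ℝ)
    (hf0 : ∀ s ∈ Set.Ici (0:ℝ), 0 ≤ f s) (hf : AntitoneOn f (Set.Ici (0:ℝ)))
    (hfm : Measurable f)
    (Ω : Set (EuclideanSpace ℝ (Fin N))) (hΩ : MeasurableSet Ω) (hfin : volume Ω < ⊤) :
    letI ωN : ℝ := (volume (ball (0 : EuclideanSpace ℝ (Fin N)) 1)).toReal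
    letI RΩ : ℝ := ((volume Ω).toReal / ωN) ^ ((1 : ℝ) / N)
    letI R₁ : ℝ :=
      ((volume (Ω ∩ ball (0 : EuclideanSpace ℝ (Fin N)) RΩ)).toReal / ωN) ^ ((1 : ℝ) / N)
    letI R₂ : ℝ :=
      (((volume (Ω \ ball (0 : EuclideanSpace ℝ (Fin N)) RΩ)).toReal + (volume Ω).toReal)
        / ωN) ^ ((1 : ℝ) / N)
    ∫⁻ x in ball (0 : EuclideanSpace ℝ (Fin N)) RΩ, ENNReal.ofReal (f ‖x‖) ≥
      (∫⁻ x in Ω, ENNReal.ofReal (f ‖x‖)) +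
        ENNReal.ofReal (N * ωN * ∫ ρ in R₁..R₂, |f ρ - f RΩ| * ρ ^ (N - 1)) := by
  haveI : NeZero N := ⟨by omega⟩
  haveI : Nontrivial (EuclideanSpace ℝ (Fin N)) := inferInstance
  have hNne : N ≠ 0 := by omega
  set ωN : ℝ := (volume (ball (0 : EuclideanSpace ℝ (Fin N)) 1)).toReal with hωN
  set RΩ : ℝ := ((volume Ω).toReal / ωN) ^ ((1 : ℝ) / N) with hRΩd
  set R₁ : ℝ :=
    ((volume (Ω ∩ ball (0 : EuclideanSpace ℝ (Fin N)) RΩ)).toReal / ωN) ^ ((1 : ℝ) / N)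
    with hR₁d
  set R₂ : ℝ :=
    (((volume (Ω \ ball (0 : EuclideanSpace ℝ (Fin N)) RΩ)).toReal + (volume Ω).toReal)
      / ωN) ^ ((1 : ℝ) / N) with hR₂d
  have hωpos : 0 < ωN :=
    ENNReal.toReal_pos (measure_ball_pos _ _ one_pos).ne' measure_ball_lt_top.ne
  have hfinΩ : volume Ω ≠ ⊤ := hfin.ne
  have hAfin : volume (Ω ∩ ball (0 : EuclideanSpace ℝ (Fin N)) RΩ) ≠ ⊤ :=
    ((measure_mono Set.inter_subset_left).trans_lt hfin).ne
  have hBfin : volume (Ω \ ball (0 : EuclideanSpace ℝ (Fin N)) RΩ) ≠ ⊤ :=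
    ((measure_mono Set.diff_subset).trans_lt hfin).ne
  -- volume of balls
  have hvol : ∀ r : ℝ, 0 ≤ r →
      volume (ball (0 : EuclideanSpace ℝ (Fin N)) r) = ENNReal.ofReal (ωN * r ^ N) := by
    intro r hr
    rw [Measure.addHaar_ball volume (0 : EuclideanSpace ℝ (Fin N)) hr,
      finrank_euclideanSpace_fin, hωN,
      ← ENNReal.ofReal_toReal
        (measure_ball_lt_top (x := (0 : EuclideanSpace ℝ (Fin N))) (r := 1)).ne,
      ← ENNReal.ofReal_mul (pow_nonneg hr N), mul_comm, ENNReal.toReal_ofReal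
        ENNReal.toReal_nonneg]
  have hrad : ∀ a : ℝ, 0 ≤ a →
      volume (ball (0 : EuclideanSpace ℝ (Fin N)) ((a / ωN) ^ ((1:ℝ)/N)))
        = ENNReal.ofReal a := by
    intro a ha
    have hd : 0 ≤ a / ωN := div_nonneg ha hωpos.le
    rw [hvol _ (Real.rpow_nonneg hd _), one_div, Real.rpow_inv_natCast_pow hd hNne,
      mul_comm, div_mul_cancel₀ a hωpos.ne']
  have hRΩ0 : 0 ≤ RΩ := Real.rpow_nonneg (div_nonneg ENNReal.toReal_nonneg hωpos.le) _
  have hR₁0 : 0 ≤ R₁ := Real.rpow_nonneg (div_nonneg ENNReal.toReal_nonneg hωpos.le) _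
  have hR₂0 : 0 ≤ R₂ := Real.rpow_nonneg
    (div_nonneg (add_nonneg ENNReal.toReal_nonneg ENNReal.toReal_nonneg) hωpos.le) _
  have hballΩ : volume (ball (0 : EuclideanSpace ℝ (Fin N)) RΩ) = volume Ω := by
    rw [hRΩd, hrad _ ENNReal.toReal_nonneg, ENNReal.ofReal_toReal hfinΩ]
  have hball₁ : volume (ball (0 : EuclideanSpace ℝ (Fin N)) R₁)
      = volume (Ω ∩ ball (0 : EuclideanSpace ℝ (Fin N)) RΩ) := by
    rw [hR₁d, hrad _ ENNReal.toReal_nonneg, ENNReal.ofReal_toReal hAfin]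
  have hball₂ : volume (ball (0 : EuclideanSpace ℝ (Fin N)) R₂)
      = volume (Ω \ ball (0 : EuclideanSpace ℝ (Fin N)) RΩ) + volume Ω := by
    rw [hR₂d, hrad _ (add_nonneg ENNReal.toReal_nonneg ENNReal.toReal_nonneg),
      ENNReal.ofReal_add ENNReal.toReal_nonneg ENNReal.toReal_nonneg,
      ENNReal.ofReal_toReal hBfin, ENNReal.ofReal_toReal hfinΩ]
  have h12 : R₁ ≤ RΩ := by
    rw [hR₁d, hRΩd]
    gcongr
    · exact Set.inter_subset_left
  have h2R : RΩ ≤ R₂ := by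
    rw [hRΩd, hR₂d]
    gcongr
    exact le_add_of_nonneg_left ENNReal.toReal_nonneg
  have hR₁R₂ : R₁ ≤ R₂ := h12.trans h2R
  set B₁ : Set (EuclideanSpace ℝ (Fin N)) := ball 0 R₁ with hB₁d
  set BΩ : Set (EuclideanSpace ℝ (Fin N)) := ball 0 RΩ with hBΩd
  set B₂ : Set (EuclideanSpace ℝ (Fin N)) := ball 0 R₂ with hB₂d
  have hmB₁ : MeasurableSet B₁ := measurableSet_ball
  have hmBΩ : MeasurableSet BΩ := measurableSet_ball
  have hmB₂ : MeasurableSet B₂ := measurableSet_ball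
  have hfinBΩ : volume BΩ ≠ ⊤ := measure_ball_lt_top.ne
  have hfinB₂ : volume B₂ ≠ ⊤ := measure_ball_lt_top.ne
  -- the difference measure
  have hdiffΩ : volume (Ω \ BΩ) = volume Ω - volume (Ω ∩ BΩ) := by
    have h := measure_diff (μ := volume) (Set.inter_subset_left (s := Ω) (t := BΩ))
      (hΩ.inter hmBΩ).nullMeasurableSet hAfin
    rwa [Set.diff_self_inter] at h
  have hdiffBΩ : volume (BΩ \ Ω) = volume Ω - volume (Ω ∩ BΩ) := by
    have h := measure_diff (μ := volume) (Set.inter_subset_left (s := BΩ) (t := Ω))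
      (hmBΩ.inter hΩ).nullMeasurableSet
      ((measure_mono Set.inter_subset_left).trans_lt hfinBΩ.lt_top).ne
    rwa [Set.diff_self_inter, hballΩ, Set.inter_comm] at h
  have hμAnn₁ : volume (BΩ \ B₁) = volume (Ω \ BΩ) := by
    rw [measure_diff (ball_subset_ball h12) hmB₁.nullMeasurableSet measure_ball_lt_top.ne,
      hballΩ, hball₁, hdiffΩ]
  have hμAnn₂ : volume (B₂ \ BΩ) = volume (Ω \ BΩ) := by
    rw [measure_diff (ball_subset_ball h2R) hmBΩ.nullMeasurableSet measure_ball_lt_top.ne,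
      hball₂, hballΩ, ENNReal.add_sub_cancel_right hfinΩ]
  -- Claim 1
  have hc1 : ∫⁻ x in BΩ \ B₁, ENNReal.ofReal (f ‖x‖) ≤
      ∫⁻ x in BΩ \ Ω, ENNReal.ofReal (f ‖x‖) := by
    refine bathtub_lintegral (hmBΩ.diff hΩ) (hmBΩ.diff hmB₁) ?_
      ((measure_mono Set.diff_subset).trans_lt hfinBΩ.lt_top).ne
      (c := ENNReal.ofReal (f R₁)) ?_ ?_
    · rw [hdiffBΩ, hμAnn₁, hdiffΩ]
    · rintro x ⟨⟨hx1, _⟩, hx3⟩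
      have hxB₁ : x ∈ B₁ := by by_contra h; exact hx3 ⟨hx1, h⟩
      have hxle : ‖x‖ ≤ R₁ := (mem_ball_zero_iff.1 hxB₁).le
      exact ENNReal.ofReal_le_ofReal
        (hf (Set.mem_Ici.2 (norm_nonneg x)) (Set.mem_Ici.2 hR₁0) hxle)
    · rintro x ⟨⟨_, hx2⟩, _⟩
      have hxge : R₁ ≤ ‖x‖ := not_lt.1 fun h => hx2 (mem_ball_zero_iff.2 h)
      exact ENNReal.ofReal_le_ofReal
        (hf (Set.mem_Ici.2 hR₁0) (Set.mem_Ici.2 (norm_nonneg x)) hxge)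
  -- Claim 2
  have hc2 : ∫⁻ x in Ω \ BΩ, ENNReal.ofReal (f ‖x‖) ≤
      ∫⁻ x in B₂ \ BΩ, ENNReal.ofReal (f ‖x‖) := by
    refine bathtub_lintegral (hmB₂.diff hmBΩ) (hΩ.diff hmBΩ) hμAnn₂
      ((measure_mono Set.diff_subset).trans_lt hfin).ne
      (c := ENNReal.ofReal (f R₂)) ?_ ?_
    · rintro x ⟨⟨hx1, _⟩, _⟩
      have hxle : ‖x‖ ≤ R₂ := (mem_ball_zero_iff.1 hx1).le
      exact ENNReal.ofReal_le_ofReal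
        (hf (Set.mem_Ici.2 (norm_nonneg x)) (Set.mem_Ici.2 hR₂0) hxle)
    · rintro x ⟨⟨_, hx2⟩, hx3⟩
      have hxB₂ : x ∉ B₂ := fun h => hx3 ⟨h, hx2⟩
      have hxge : R₂ ≤ ‖x‖ := not_lt.1 fun h => hxB₂ (mem_ball_zero_iff.2 h)
      exact ENNReal.ofReal_le_ofReal
        (hf (Set.mem_Ici.2 hR₂0) (Set.mem_Ici.2 (norm_nonneg x)) hxge)
  have hfRΩ0 : 0 ≤ f RΩ := hf0 _ (Set.mem_Ici.2 hRΩ0)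
  have hgmeas : Measurable fun x : EuclideanSpace ℝ (Fin N) => ENNReal.ofReal (f ‖x‖) :=
    (hfm.comp measurable_norm).ennreal_ofReal
  have hsplit₁ : ∫⁻ x in BΩ \ B₁, ENNReal.ofReal (f ‖x‖)
      = (∫⁻ x in BΩ \ B₁, (ENNReal.ofReal (f ‖x‖) - ENNReal.ofReal (f RΩ)))
        + ENNReal.ofReal (f RΩ) * volume (BΩ \ B₁) := by
    rw [← setLIntegral_const (BΩ \ B₁) (ENNReal.ofReal (f RΩ)),
      ← lintegral_add_right _ measurable_const]
    refine setLIntegral_congr_fun (hmBΩ.diff hmB₁) (fun x hx => ?_)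
    have h : ENNReal.ofReal (f RΩ) ≤ ENNReal.ofReal (f ‖x‖) :=
      ENNReal.ofReal_le_ofReal (hf (Set.mem_Ici.2 (norm_nonneg x)) (Set.mem_Ici.2 hRΩ0)
        (mem_ball_zero_iff.1 hx.1).le)
    exact (tsub_add_cancel_of_le h).symm
  have hsplit₂ : (∫⁻ x in B₂ \ BΩ, ENNReal.ofReal (f ‖x‖))
      + (∫⁻ x in B₂ \ BΩ, (ENNReal.ofReal (f RΩ) - ENNReal.ofReal (f ‖x‖)))
      = ENNReal.ofReal (f RΩ) * volume (B₂ \ BΩ) := by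
    rw [← setLIntegral_const (B₂ \ BΩ) (ENNReal.ofReal (f RΩ)),
      ← lintegral_add_right _ (show Measurable fun x : EuclideanSpace ℝ (Fin N) =>
        ENNReal.ofReal (f RΩ) - ENNReal.ofReal (f ‖x‖) from measurable_const.sub hgmeas)]
    refine setLIntegral_congr_fun (hmB₂.diff hmBΩ) (fun x hx => ?_)
    have hge : RΩ ≤ ‖x‖ := not_lt.1 fun h => hx.2 (mem_ball_zero_iff.2 h)
    have h : ENNReal.ofReal (f ‖x‖) ≤ ENNReal.ofReal (f RΩ) :=
      ENNReal.ofReal_le_ofReal (hf (Set.mem_Ici.2 hRΩ0) (Set.mem_Ici.2 (norm_nonneg x)) hge)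
    exact add_tsub_cancel_of_le h
  have habs₁ : ∫⁻ x in BΩ \ B₁, (ENNReal.ofReal (f ‖x‖) - ENNReal.ofReal (f RΩ))
      = ∫⁻ x in BΩ \ B₁, ENNReal.ofReal |f ‖x‖ - f RΩ| := by
    refine setLIntegral_congr_fun (hmBΩ.diff hmB₁) (fun x hx => ?_)
    have hle : f RΩ ≤ f ‖x‖ := hf (Set.mem_Ici.2 (norm_nonneg x)) (Set.mem_Ici.2 hRΩ0)
      (mem_ball_zero_iff.1 hx.1).le
    rw [← ENNReal.ofReal_sub _ hfRΩ0, abs_of_nonneg (sub_nonneg.2 hle)]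
  have habs₂ : ∫⁻ x in B₂ \ BΩ, (ENNReal.ofReal (f RΩ) - ENNReal.ofReal (f ‖x‖))
      = ∫⁻ x in B₂ \ BΩ, ENNReal.ofReal |f ‖x‖ - f RΩ| := by
    refine setLIntegral_congr_fun (hmB₂.diff hmBΩ) (fun x hx => ?_)
    have hge : RΩ ≤ ‖x‖ := not_lt.1 fun h => hx.2 (mem_ball_zero_iff.2 h)
    have hle : f ‖x‖ ≤ f RΩ := hf (Set.mem_Ici.2 hRΩ0) (Set.mem_Ici.2 (norm_nonneg x)) hge
    have h0 : 0 ≤ f ‖x‖ := hf0 _ (Set.mem_Ici.2 (norm_nonneg x))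
    rw [← ENNReal.ofReal_sub _ h0, abs_sub_comm, abs_of_nonneg (sub_nonneg.2 hle)]
  have hset : (BΩ \ B₁) ∪ (B₂ \ BΩ) = B₂ \ B₁ := by
    rw [hB₁d, hBΩd, hB₂d]
    ext x
    simp only [Set.mem_union, Set.mem_diff, mem_ball_zero_iff]
    constructor
    · rintro (⟨a, b⟩ | ⟨a, b⟩)
      · exact ⟨lt_of_lt_of_le a h2R, b⟩
      · exact ⟨a, fun hlt => b (lt_of_lt_of_le hlt h12)⟩
    · rintro ⟨a, b⟩
      rcases lt_or_ge ‖x‖ RΩ with hc | hc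
      · exact Or.inl ⟨hc, b⟩
      · exact Or.inr ⟨a, not_lt.2 hc⟩
  have hunion : (∫⁻ x in BΩ \ B₁, ENNReal.ofReal |f ‖x‖ - f RΩ|)
      + (∫⁻ x in B₂ \ BΩ, ENNReal.ofReal |f ‖x‖ - f RΩ|)
      = ∫⁻ x in B₂ \ B₁, ENNReal.ofReal |f ‖x‖ - f RΩ| := by
    rw [← lintegral_union (hmB₂.diff hmBΩ)
      (Set.disjoint_left.mpr fun {x} hx hx2 => hx2.2 hx.1), hset]
  -- polar coordinates
  have hDmeas : MeasurableSet (B₂ \ B₁) := hmB₂.diff hmB₁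
  have hDfin : volume (B₂ \ B₁) ≠ ⊤ :=
    ((measure_mono Set.diff_subset).trans_lt hfinB₂.lt_top).ne
  have key1 : (fun x : EuclideanSpace ℝ (Fin N) =>
        (Set.Ico R₁ R₂).indicator (fun ρ => |f ρ - f RΩ|) ‖x‖)
      = (B₂ \ B₁).indicator (fun x => |f ‖x‖ - f RΩ|) := by
    funext x
    by_cases hx : x ∈ B₂ \ B₁
    · have hmem : ‖x‖ ∈ Set.Ico R₁ R₂ :=
        ⟨not_lt.1 fun h => hx.2 (mem_ball_zero_iff.2 h), mem_ball_zero_iff.1 hx.1⟩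
      rw [Set.indicator_of_mem hmem, Set.indicator_of_mem hx]
    · have hmem : ‖x‖ ∉ Set.Ico R₁ R₂ := fun h =>
        hx ⟨mem_ball_zero_iff.2 h.2, fun hb => not_lt.2 h.1 (mem_ball_zero_iff.1 hb)⟩
      rw [Set.indicator_of_notMem hmem, Set.indicator_of_notMem hx]
  have haeeq : (Set.Ioi 0 ∩ Set.Ico R₁ R₂ : Set ℝ) =ᵐ[volume] Set.Ioc R₁ R₂ := by
    refine Filter.EventuallyEq.trans (MeasureTheory.ae_eq_set.2 ⟨?_, ?_⟩) Ioo_ae_eq_Ioc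
    · refine measure_mono_null (t := {R₁}) (fun x hx => ?_) Real.volume_singleton
      rcases hx with ⟨⟨_, hx1, hx2⟩, hx4⟩
      have hne : ¬ R₁ < x := fun h => hx4 ⟨h, hx2⟩
      exact le_antisymm (not_lt.1 hne) hx1
    · refine measure_mono_null (t := (∅ : Set ℝ)) (fun x hx => ?_) measure_empty
      exact absurd ⟨lt_of_le_of_lt hR₁0 hx.1.1, ⟨hx.1.1.le, hx.1.2⟩⟩ hx.2
  have hinner : (∫ y in Set.Ioi (0:ℝ),
        y ^ (N-1) • (Set.Ico R₁ R₂).indicator (fun ρ => |f ρ - f RΩ|) y)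
      = ∫ ρ in R₁..R₂, |f ρ - f RΩ| * ρ ^ (N-1) := by
    have e1 : (fun y : ℝ => y ^ (N-1) • (Set.Ico R₁ R₂).indicator (fun ρ => |f ρ - f RΩ|) y)
        = (Set.Ico R₁ R₂).indicator (fun y => y ^ (N-1) • |f y - f RΩ|) := by
      funext y
      by_cases hy : y ∈ Set.Ico R₁ R₂ <;>
        simp [Set.indicator_of_mem, Set.indicator_of_notMem, hy]
    rw [e1, setIntegral_indicator measurableSet_Ico, setIntegral_congr_set haeeq,
      intervalIntegral.integral_of_le hR₁R₂]
    refine setIntegral_congr_fun measurableSet_Ioc fun y hy => ?_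
    rw [smul_eq_mul, mul_comm]
  have hpolar0 := integral_fun_norm_addHaar (volume : Measure (EuclideanSpace ℝ (Fin N)))
      ((Set.Ico R₁ R₂).indicator fun ρ => |f ρ - f RΩ|)
  rw [finrank_euclideanSpace_fin, measureReal_def, ← hωN, key1, MeasureTheory.integral_indicator hDmeas, hinner,
    nsmul_eq_mul, smul_eq_mul, ← mul_assoc] at hpolar0
  have hImeas : AEStronglyMeasurable (fun x : EuclideanSpace ℝ (Fin N) => |f ‖x‖ - f RΩ|)
      (volume.restrict (B₂ \ B₁)) :=
    (((hfm.comp measurable_norm).sub measurable_const).abs).aestronglyMeasurable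
  have hInt : IntegrableOn (fun x : EuclideanSpace ℝ (Fin N) => |f ‖x‖ - f RΩ|) (B₂ \ B₁) := by
    refine Integrable.mono' (g := fun _ => f R₁ + f RΩ)
      (integrableOn_const hDfin) hImeas ?_
    filter_upwards [ae_restrict_mem hDmeas] with x hx
    have hx1 : R₁ ≤ ‖x‖ := not_lt.1 fun h => hx.2 (mem_ball_zero_iff.2 h)
    have h1 : f ‖x‖ ≤ f R₁ := hf (Set.mem_Ici.2 hR₁0) (Set.mem_Ici.2 (norm_nonneg x)) hx1
    have h2 : 0 ≤ f ‖x‖ := hf0 _ (Set.mem_Ici.2 (norm_nonneg x))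
    have h3 : 0 ≤ f R₁ := hf0 _ (Set.mem_Ici.2 hR₁0)
    rw [Real.norm_eq_abs, abs_abs]
    exact abs_le.2 ⟨by linarith, by linarith⟩
  have hlift : ENNReal.ofReal (∫ x in B₂ \ B₁, |f ‖x‖ - f RΩ|)
      = ∫⁻ x in B₂ \ B₁, ENNReal.ofReal |f ‖x‖ - f RΩ| :=
    ofReal_integral_eq_lintegral_ofReal hInt (ae_of_all _ fun x => abs_nonneg _)
  have hT : ENNReal.ofReal ((N:ℝ) * ωN * ∫ ρ in R₁..R₂, |f ρ - f RΩ| * ρ ^ (N - 1))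
      = ∫⁻ x in B₂ \ B₁, ENNReal.ofReal |f ‖x‖ - f RΩ| := by
    rw [← hpolar0]; exact hlift
  have hμ : volume (B₂ \ BΩ) = volume (BΩ \ B₁) := hμAnn₂.trans hμAnn₁.symm
  have KEY : (∫⁻ x in B₂ \ BΩ, ENNReal.ofReal (f ‖x‖))
      + ENNReal.ofReal ((N:ℝ) * ωN * ∫ ρ in R₁..R₂, |f ρ - f RΩ| * ρ ^ (N - 1))
      ≤ ∫⁻ x in BΩ \ B₁, ENNReal.ofReal (f ‖x‖) := by
    rw [hT, ← hunion, hsplit₁, ← habs₁, ← habs₂]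
    calc (∫⁻ x in B₂ \ BΩ, ENNReal.ofReal (f ‖x‖))
        + ((∫⁻ x in BΩ \ B₁, (ENNReal.ofReal (f ‖x‖) - ENNReal.ofReal (f RΩ)))
          + ∫⁻ x in B₂ \ BΩ, (ENNReal.ofReal (f RΩ) - ENNReal.ofReal (f ‖x‖)))
        = (∫⁻ x in BΩ \ B₁, (ENNReal.ofReal (f ‖x‖) - ENNReal.ofReal (f RΩ)))
          + ((∫⁻ x in B₂ \ BΩ, ENNReal.ofReal (f ‖x‖))
            + ∫⁻ x in B₂ \ BΩ, (ENNReal.ofReal (f RΩ) - ENNReal.ofReal (f ‖x‖))) := by ring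
      _ = (∫⁻ x in BΩ \ B₁, (ENNReal.ofReal (f ‖x‖) - ENNReal.ofReal (f RΩ)))
          + ENNReal.ofReal (f RΩ) * volume (BΩ \ B₁) := by rw [hsplit₂, hμ]
      _ ≤ _ := le_rfl
  calc (∫⁻ x in Ω, ENNReal.ofReal (f ‖x‖))
      + ENNReal.ofReal ((N:ℝ) * ωN * ∫ ρ in R₁..R₂, |f ρ - f RΩ| * ρ ^ (N - 1))
      = ((∫⁻ x in Ω ∩ BΩ, ENNReal.ofReal (f ‖x‖)) + ∫⁻ x in Ω \ BΩ, ENNReal.ofReal (f ‖x‖))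
        + ENNReal.ofReal ((N:ℝ) * ωN * ∫ ρ in R₁..R₂, |f ρ - f RΩ| * ρ ^ (N - 1)) := by
        rw [lintegral_inter_add_diff _ Ω hmBΩ]
    _ = (∫⁻ x in Ω ∩ BΩ, ENNReal.ofReal (f ‖x‖))
        + ((∫⁻ x in Ω \ BΩ, ENNReal.ofReal (f ‖x‖))
          + ENNReal.ofReal ((N:ℝ) * ωN * ∫ ρ in R₁..R₂, |f ρ - f RΩ| * ρ ^ (N - 1))) := by
        ring
    _ ≤ (∫⁻ x in Ω ∩ BΩ, ENNReal.ofReal (f ‖x‖))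
        + ((∫⁻ x in B₂ \ BΩ, ENNReal.ofReal (f ‖x‖))
          + ENNReal.ofReal ((N:ℝ) * ωN * ∫ ρ in R₁..R₂, |f ρ - f RΩ| * ρ ^ (N - 1))) :=
        add_le_add_right (add_le_add_left hc2 _) _
    _ ≤ (∫⁻ x in Ω ∩ BΩ, ENNReal.ofReal (f ‖x‖)) + ∫⁻ x in BΩ \ B₁, ENNReal.ofReal (f ‖x‖) :=
        add_le_add_right KEY _
    _ ≤ (∫⁻ x in Ω ∩ BΩ, ENNReal.ofReal (f ‖x‖)) + ∫⁻ x in BΩ \ Ω, ENNReal.ofReal (f ‖x‖) :=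
        add_le_add_right hc1 _
    _ = (∫⁻ x in BΩ ∩ Ω, ENNReal.ofReal (f ‖x‖)) + ∫⁻ x in BΩ \ Ω, ENNReal.ofReal (f ‖x‖) := by
        rw [Set.inter_comm]
    _ = ∫⁻ x in BΩ, ENNReal.ofReal (f ‖x‖) := lintegral_inter_add_diff _ BΩ hΩ
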